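/- (Theorem 3, combinatorial lower bound Ω(LT)) Let L ≥ 1 be an integer and let T be an integer divisible by 3 with T ≥ 12. For any functions s, n_A, n_B : {1,…,L} → ℕ with s_j ≤ T/3, s_j ≤ n_{A,j} ≤ T, and n_{B,j} ≤ 2T/3 + s_j for every j, there exists a choice c : {1,…,L} → {A, B} such that Σ_{j=1}^{L} R_{c(j)}(j) ≥ L·T/32, where R_A(j) = Σ_{n=1}^{T} μ^A(n) − J_A(n_{A,j}) and R_B(j) = T/2 − J_B(n_{B,j}). -/

import Mathlib

open Finset

/-- Reward function of the rising arm on instance A: `μ^A(n) = 3n/(2T)` if `n ≤ 2T/3`,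
and `1` otherwise. -/
noncomputable def muA (T n : ℕ) : ℝ := if 3 * n ≤ 2 * T then (3 * n : ℝ) / (2 * T) else 1

/-- Reward function of the rising arm on instance B: `μ^B(n) = 3n/(2T)` if `n ≤ T/3`,
and `1/2` otherwise. -/
noncomputable def muB (T n : ℕ) : ℝ := if 3 * n ≤ T then (3 * n : ℝ) / (2 * T) else 1 / 2

/-- Cumulative reward over horizon `T` on instance A when the constant arm (mean `1/2`) is
pulled `n₁` times and the rising arm the remaining `T - n₁` times. -/
noncomputable def JA (T n₁ : ℕ) : ℝ := (n₁ : ℝ) / 2 + ∑ n ∈ Finset.Icc 1 (T - n₁), muA T n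

/-- Cumulative reward over horizon `T` on instance B when the constant arm (mean `1/2`) is
pulled `n₁` times and the rising arm the remaining `T - n₁` times. -/
noncomputable def JB (T n₁ : ℕ) : ℝ := (n₁ : ℝ) / 2 + ∑ n ∈ Finset.Icc 1 (T - n₁), muB T n

lemma sum_id_Icc (K : ℕ) : ∑ n ∈ Icc 1 K, (n : ℝ) = K * (K + 1) / 2 := by
  induction K with
  | zero => simp
  | succ k ih =>
    rw [Finset.sum_Icc_succ_top (by omega), ih]
    push_cast; ring

lemma sumA_low (m K : ℕ) (hm : 1 ≤ m) (hK : K ≤ 2 * m) :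
    ∑ n ∈ Icc 1 K, muA (3 * m) n = (K : ℝ) * (K + 1) / (4 * m) := by
  have hm' : (m : ℝ) ≠ 0 := by positivity
  have h : ∀ n ∈ Icc 1 K, muA (3 * m) n = (n : ℝ) / (2 * m) := by
    intro n hn
    simp only [Finset.mem_Icc] at hn
    rw [muA, if_pos (by omega)]
    push_cast; field_simp
  rw [Finset.sum_congr rfl h, ← Finset.sum_div, sum_id_Icc, div_div]
  ring_nf

lemma sumA_high (m K : ℕ) (hm : 1 ≤ m) (h1 : 2 * m ≤ K) :
    ∑ n ∈ Icc 1 K, muA (3 * m) n = (K : ℝ) - m + 1 / 2 := by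
  have hm' : (m : ℝ) ≠ 0 := by positivity
  have hsplit : Icc 1 (2 * m) ∪ Ioc (2 * m) K = Icc 1 K := by
    ext a
    simp only [Finset.mem_union, Finset.mem_Icc, Finset.mem_Ioc]
    omega
  have hdisj : Disjoint (Icc 1 (2 * m)) (Ioc (2 * m) K) := by
    rw [Finset.disjoint_left]
    intro a ha hb
    simp only [Finset.mem_Icc] at ha
    simp only [Finset.mem_Ioc] at hb
    omega
  rw [← hsplit, Finset.sum_union hdisj, sumA_low m (2 * m) hm le_rfl]
  have h2 : ∀ n ∈ Ioc (2 * m) K, muA (3 * m) n = 1 := by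
    intro n hn
    simp only [Finset.mem_Ioc] at hn
    rw [muA, if_neg (by omega)]
  rw [Finset.sum_congr rfl h2, Finset.sum_const, Nat.card_Ioc]
  push_cast [Nat.cast_sub h1]
  rw [nsmul_eq_mul, Nat.cast_sub (by omega)]; push_cast
  field_simp; ring

lemma sumB_low (m K : ℕ) (hm : 1 ≤ m) (hK : K ≤ m) :
    ∑ n ∈ Icc 1 K, muB (3 * m) n = (K : ℝ) * (K + 1) / (4 * m) := by
  have hm' : (m : ℝ) ≠ 0 := by positivity
  have h : ∀ n ∈ Icc 1 K, muB (3 * m) n = (n : ℝ) / (2 * m) := by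
    intro n hn
    simp only [Finset.mem_Icc] at hn
    rw [muB, if_pos (by omega)]
    push_cast; field_simp
  rw [Finset.sum_congr rfl h, ← Finset.sum_div, sum_id_Icc, div_div]
  ring_nf

lemma sumB_high (m K : ℕ) (hm : 1 ≤ m) (h1 : m ≤ K) :
    ∑ n ∈ Icc 1 K, muB (3 * m) n = ((m : ℝ) + 1) / 4 + ((K : ℝ) - m) / 2 := by
  have hm' : (m : ℝ) ≠ 0 := by positivity
  have hsplit : Icc 1 m ∪ Ioc m K = Icc 1 K := by
    ext a
    simp only [Finset.mem_union, Finset.mem_Icc, Finset.mem_Ioc]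
    omega
  have hdisj : Disjoint (Icc 1 m) (Ioc m K) := by
    rw [Finset.disjoint_left]
    intro a ha hb
    simp only [Finset.mem_Icc] at ha
    simp only [Finset.mem_Ioc] at hb
    omega
  rw [← hsplit, Finset.sum_union hdisj, sumB_low m m hm le_rfl]
  have h2 : ∀ n ∈ Ioc m K, muB (3 * m) n = 1 / 2 := by
    intro n hn
    simp only [Finset.mem_Ioc] at hn
    rw [muB, if_neg (by omega)]
  rw [Finset.sum_congr rfl h2, Finset.sum_const, Nat.card_Ioc]
  push_cast [Nat.cast_sub h1]
  rw [nsmul_eq_mul, Nat.cast_sub (by omega)]; push_cast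
  field_simp

lemma regretA (m n₁ sj : ℕ) (hm : 4 ≤ m) (hs : m ≤ 2 * sj) (h1 : sj ≤ n₁)
    (h2 : n₁ ≤ 3 * m) :
    (3 * (m : ℝ)) / 32 ≤ (∑ n ∈ Icc 1 (3 * m), muA (3 * m) n) - JA (3 * m) n₁ := by
  have hm1 : 1 ≤ m := by omega
  have hmR : (4 : ℝ) ≤ m := by exact_mod_cast hm
  have hfull : ∑ n ∈ Icc 1 (3 * m), muA (3 * m) n = 2 * (m : ℝ) + 1 / 2 := by
    rw [sumA_high m (3 * m) hm1 (by omega)]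
    push_cast; ring
  rw [hfull, JA]
  rcases le_or_gt n₁ m with hcase | hcase
  · -- n₁ ≤ m : tail sum is in high regime
    rw [sumA_high m (3 * m - n₁) hm1 (by omega)]
    have hc : ((3 * m - n₁ : ℕ) : ℝ) = 3 * m - n₁ := by
      push_cast [Nat.cast_sub h2]; ring
    rw [hc]
    have hn : (m : ℝ) ≤ 2 * n₁ := by
      have : m ≤ 2 * n₁ := by omega
      exact_mod_cast this
    linarith
  · -- n₁ > m : tail sum in low regime
    rw [sumA_low m (3 * m - n₁) hm1 (by omega)]
    have hc : ((3 * m - n₁ : ℕ) : ℝ) = 3 * m - n₁ := by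
      push_cast [Nat.cast_sub h2]; ring
    rw [hc]
    have hx1 : (m : ℝ) ≤ (n₁ : ℝ) := by exact_mod_cast hcase.le
    have hx2 : (n₁ : ℝ) ≤ 3 * (m : ℝ) := by
      have := h2
      push_cast
      exact_mod_cast this
    have h4m : (0 : ℝ) < 4 * m := by positivity
    have key : (3 * (m : ℝ) - n₁) * ((3 * m - n₁) + 1) / (4 * m) ≤
        (2 * m + 1 / 2) - (n₁ : ℝ) / 2 - 3 * m / 32 := by
      rw [div_le_iff₀ h4m]
      nlinarith [mul_nonneg (sub_nonneg.2 hx2) (sub_nonneg.2 hx1)]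
    linarith

lemma regretB (m n₁ sj : ℕ) (hm : 4 ≤ m) (hs : 2 * sj < m) (h2 : n₁ ≤ 2 * m + sj) :
    (3 * (m : ℝ)) / 32 ≤ (3 * (m : ℝ)) / 2 - JB (3 * m) n₁ := by
  have hm1 : 1 ≤ m := by omega
  have hmR : (4 : ℝ) ≤ m := by exact_mod_cast hm
  have hn3 : n₁ ≤ 3 * m := by omega
  rw [JB]
  rcases le_or_gt n₁ (2 * m) with hcase | hcase
  · -- 3m - n₁ ≥ m : high regime
    rw [sumB_high m (3 * m - n₁) hm1 (by omega)]
    have hc : ((3 * m - n₁ : ℕ) : ℝ) = 3 * m - n₁ := by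
      push_cast [Nat.cast_sub hn3]; ring
    rw [hc]
    linarith
  · -- 3m - n₁ < m : low regime
    rw [sumB_low m (3 * m - n₁) hm1 (by omega)]
    have hc : ((3 * m - n₁ : ℕ) : ℝ) = 3 * m - n₁ := by
      push_cast [Nat.cast_sub hn3]; ring
    rw [hc]
    have hb1 : (m : ℝ) + 1 ≤ 2 * (3 * (m : ℝ) - n₁) := by
      have h' : m + 1 ≤ 2 * (3 * m - n₁) := by omega
      calc (m : ℝ) + 1 ≤ ((2 * (3 * m - n₁) : ℕ) : ℝ) := by exact_mod_cast h'
        _ = 2 * (3 * (m : ℝ) - n₁) := by push_cast [Nat.cast_sub hn3]; ring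
    have hb2 : 3 * (m : ℝ) - n₁ ≤ m - 1 := by
      have h' : 3 * m - n₁ ≤ m - 1 := by omega
      calc 3 * (m : ℝ) - n₁ = ((3 * m - n₁ : ℕ) : ℝ) := by
            push_cast [Nat.cast_sub hn3]; ring
        _ ≤ ((m - 1 : ℕ) : ℝ) := by exact_mod_cast h'
        _ = (m : ℝ) - 1 := by push_cast [Nat.cast_sub hm1]; ring
    have h4m : (0 : ℝ) < 4 * m := by positivity
    have key : (3 * (m : ℝ) - n₁) * ((3 * m - n₁) + 1) / (4 * m) ≤
        (3 * m) / 2 - (n₁ : ℝ) / 2 - 3 * m / 32 := by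
      rw [div_le_iff₀ h4m]
      nlinarith [mul_nonneg (by linarith : (0:ℝ) ≤ 2 * (3 * (m:ℝ) - n₁) - (m + 1))
        (by linarith : (0:ℝ) ≤ ((m:ℝ) - 1) - (3 * m - n₁))]
    linarith

/-- (Theorem 3, combinatorial lower bound Ω(LT)) In the `L`-fold product of the two-armed
construction, for any per-coordinate pull counts there is an adversarial choice of instance
(A or B, encoded by `true`/`false`) in each coordinate making the total regret at least
`L·T/32`. -/
theorem combinatorial_lower_bound
    (L T : ℕ) (hL : 1 ≤ L) (hT3 : 3 ∣ T) (hT : 12 ≤ T)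
    (s nA nB : Fin L → ℕ)
    (hs : ∀ j, s j ≤ T / 3) (hsA : ∀ j, s j ≤ nA j) (hAT : ∀ j, nA j ≤ T)
    (hB : ∀ j, nB j ≤ 2 * T / 3 + s j) :
    ∃ c : Fin L → Bool,
      (L : ℝ) * T / 32 ≤ ∑ j : Fin L,
        (if c j then (∑ n ∈ Finset.Icc 1 T, muA T n) - JA T (nA j)
         else (T : ℝ) / 2 - JB T (nB j)) := by
  obtain ⟨m, rfl⟩ := hT3
  have hm : 4 ≤ m := by omega
  refine ⟨fun j => decide (m ≤ 2 * s j), ?_⟩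
  have hterm : ∀ j : Fin L, (3 * (m : ℝ)) / 32 ≤
      (if decide (m ≤ 2 * s j) then
        (∑ n ∈ Finset.Icc 1 (3 * m), muA (3 * m) n) - JA (3 * m) (nA j)
       else (↑(3 * m) : ℝ) / 2 - JB (3 * m) (nB j)) := by
    intro j
    by_cases h : m ≤ 2 * s j
    · rw [if_pos (by simpa using h)]
      exact regretA m (nA j) (s j) hm h (hsA j) (hAT j)
    · rw [if_neg (by simpa using h)]
      have hb : nB j ≤ 2 * m + s j := by
        have := hB j
        omega
      have hr := regretB m (nB j) (s j) hm (by omega) hb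
      calc (3 * (m : ℝ)) / 32 ≤ (3 * (m : ℝ)) / 2 - JB (3 * m) (nB j) := hr
        _ = (↑(3 * m) : ℝ) / 2 - JB (3 * m) (nB j) := by push_cast; ring
  calc (L : ℝ) * ((3 * m : ℕ) : ℝ) / 32 = ∑ _j : Fin L, (3 * (m : ℝ)) / 32 := by
        rw [Finset.sum_const, Finset.card_univ, Fintype.card_fin]
        push_cast; ring
    _ ≤ _ := Finset.sum_le_sum fun j _ => hterm j
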